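/- For every positive integer n, (n+2)²/((n+1)(n+3)) < Ω_n²/(Ω_{n-1}·Ω_{n+1}); in particular 1 < Ω_n²/(Ω_{n-1}·Ω_{n+1}), i.e., the sequence (Ω_n) is strictly log-concave. -/

import Mathlib

open Real

noncomputable def unitBallVolume (n : ℕ) : ℝ :=
  Real.pi ^ ((n : ℝ) / 2) / Real.Gamma (1 + (n : ℝ) / 2)

/-- Midpoint log-convexity of Gamma. -/
lemma gamma_midpoint (p q : ℝ) (hp : 0 < p) (hq : 0 < q) :
    Real.Gamma ((p + q) / 2) ^ 2 ≤ Real.Gamma p * Real.Gamma q := by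
  have h := Real.convexOn_log_Gamma.2 (Set.mem_Ioi.2 hp) (Set.mem_Ioi.2 hq)
    (by norm_num : (0:ℝ) ≤ 1/2) (by norm_num : (0:ℝ) ≤ 1/2) (by norm_num)
  simp only [Function.comp_apply, smul_eq_mul] at h
  have hmid : (1/2 : ℝ) * p + (1/2 : ℝ) * q = (p + q) / 2 := by ring
  rw [hmid] at h
  have hm : 0 < Real.Gamma ((p + q) / 2) :=
    Real.Gamma_pos_of_pos (by linarith)
  have hgp : 0 < Real.Gamma p := Real.Gamma_pos_of_pos hp
  have hgq : 0 < Real.Gamma q := Real.Gamma_pos_of_pos hq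
  rw [← Real.log_le_log_iff (by positivity) (by positivity),
    Real.log_pow, Real.log_mul (ne_of_gt hgp) (ne_of_gt hgq)]
  push_cast
  linarith

/-- Strict midpoint log-convexity at half-integer spacing. -/
lemma gamma_strict (t : ℝ) (ht : 0 < t) :
    Real.Gamma (t + 1) ^ 2 < Real.Gamma (t + 1/2) * Real.Gamma (t + 3/2) := by
  have key : Real.Gamma (t + 2) ^ 2 ≤ Real.Gamma (t + 3/2) * Real.Gamma (t + 5/2) := by
    have := gamma_midpoint (t + 3/2) (t + 5/2) (by linarith) (by linarith)
    have h2 : (t + 3/2 + (t + 5/2)) / 2 = t + 2 := by ring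
    rwa [h2] at this
  have r1 : Real.Gamma (t + 2) = (t + 1) * Real.Gamma (t + 1) := by
    have := Real.Gamma_add_one (s := t + 1) (by positivity)
    rw [show t + 1 + 1 = t + 2 by ring] at this
    linarith [this]
  have r2 : Real.Gamma (t + 5/2) = (t + 3/2) * Real.Gamma (t + 3/2) := by
    have := Real.Gamma_add_one (s := t + 3/2) (by positivity)
    rw [show t + 3/2 + 1 = t + 5/2 by ring] at this
    linarith [this]
  have r3 : Real.Gamma (t + 3/2) = (t + 1/2) * Real.Gamma (t + 1/2) := by
    have := Real.Gamma_add_one (s := t + 1/2) (by positivity)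
    rw [show t + 1/2 + 1 = t + 3/2 by ring] at this
    linarith [this]
  rw [r1, r2, r3] at key
  have ha : 0 < Real.Gamma (t + 1/2) := Real.Gamma_pos_of_pos (by linarith)
  have hA2 : (0:ℝ) < Real.Gamma (t + 1/2) ^ 2 := by positivity
  have k2 : (t + 1)^2 * Real.Gamma (t + 1)^2
      ≤ (t + 1/2)^2 * (t + 3/2) * Real.Gamma (t + 1/2)^2 := by
    linear_combination key
  have h4 : (t + 1/2)^2 * (t + 3/2) * Real.Gamma (t + 1/2)^2
      < (t + 1)^2 * ((t + 1/2) * Real.Gamma (t + 1/2)^2) := by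
    nlinarith [mul_pos (show (0:ℝ) < t + 1/2 by linarith) hA2]
  have h5 := lt_of_le_of_lt k2 h4
  have h6 : Real.Gamma (t + 1)^2 < (t + 1/2) * Real.Gamma (t + 1/2)^2 :=
    lt_of_mul_lt_mul_left h5 (by positivity)
  rw [r3]
  nlinarith [h6]

theorem stmt_12 (n : ℕ) (hn : 1 ≤ n) :
    ((n : ℝ) + 2) ^ 2 / (((n : ℝ) + 1) * ((n : ℝ) + 3)) <
        unitBallVolume n ^ 2 / (unitBallVolume (n - 1) * unitBallVolume (n + 1)) ∧
      1 < unitBallVolume n ^ 2 / (unitBallVolume (n - 1) * unitBallVolume (n + 1)) := by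
  set m : ℝ := (n : ℝ) with hm
  have hm1 : (1 : ℝ) ≤ m := by rw [hm]; exact_mod_cast hn
  have hcast1 : ((n - 1 : ℕ) : ℝ) = m - 1 := by
    rw [Nat.cast_sub hn]; norm_num; exact hm.symm
  have hcast2 : ((n + 1 : ℕ) : ℝ) = m + 1 := by push_cast; ring
  clear_value m
  have ha : 0 < Real.Gamma (m/2 + 1/2) := Real.Gamma_pos_of_pos (by linarith)
  have hb : 0 < Real.Gamma (m/2 + 1) := Real.Gamma_pos_of_pos (by linarith)
  have hc : 0 < Real.Gamma (m/2 + 3/2) := Real.Gamma_pos_of_pos (by linarith)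
  have hπ : (0:ℝ) < Real.pi := Real.pi_pos
  have hpow : (0:ℝ) < Real.pi ^ (m/2 * 2) := Real.rpow_pos_of_pos hπ _
  have hratio : unitBallVolume n ^ 2 / (unitBallVolume (n - 1) * unitBallVolume (n + 1))
      = Real.Gamma (m/2 + 1/2) * Real.Gamma (m/2 + 3/2) / Real.Gamma (m/2 + 1) ^ 2 := by
    unfold unitBallVolume
    rw [hcast1, hcast2, ← hm]
    rw [show (1 : ℝ) + m / 2 = m/2 + 1 by ring,
      show (1 : ℝ) + (m - 1) / 2 = m/2 + 1/2 by ring,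
      show (1 : ℝ) + (m + 1) / 2 = m/2 + 3/2 by ring]
    rw [div_pow, div_mul_div_comm, ← Real.rpow_natCast (Real.pi ^ (m/2)) 2,
      ← Real.rpow_natCast _ 2, ← Real.rpow_mul hπ.le, ← Real.rpow_add hπ]
    push_cast
    rw [show (m - 1)/2 + (m + 1)/2 = m/2 * 2 by ring]
    field_simp
  rw [hratio]
  have hkey := gamma_strict (m/2 + 1) (by linarith)
  have r1 : Real.Gamma (m/2 + 1 + 1) = (m/2 + 1) * Real.Gamma (m/2 + 1) := by
    exact Real.Gamma_add_one (s := m/2 + 1) (by positivity)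
  have r2 : Real.Gamma (m/2 + 1 + 3/2) = (m/2 + 3/2) * Real.Gamma (m/2 + 3/2) := by
    have := Real.Gamma_add_one (s := m/2 + 3/2) (by positivity)
    rw [show m/2 + 3/2 + 1 = m/2 + 1 + 3/2 by ring] at this
    linarith [this]
  have r3 : Real.Gamma (m/2 + 1 + 1/2) = (m/2 + 1/2) * Real.Gamma (m/2 + 1/2) := by
    have := Real.Gamma_add_one (s := m/2 + 1/2) (by positivity)
    rw [show m/2 + 1/2 + 1 = m/2 + 1 + 1/2 by ring] at this
    linarith [this]
  rw [r1, r2, r3] at hkey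
  have h1 : (m + 2) ^ 2 / ((m + 1) * (m + 3)) <
      Real.Gamma (m/2 + 1/2) * Real.Gamma (m/2 + 3/2) / Real.Gamma (m/2 + 1) ^ 2 := by
    rw [div_lt_div_iff₀ (by nlinarith) (by positivity)]
    nlinarith [hkey]
  refine ⟨h1, ?_⟩
  have h2 : (1 : ℝ) < (m + 2) ^ 2 / ((m + 1) * (m + 3)) := by
    rw [lt_div_iff₀ (by nlinarith)]
    nlinarith
  linarith
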